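/- For every function f : κ → [κ]^{<ω}, the operator Φ_f defined on closed bounded-in-κ sets x by Φ_f(x) := x ∪ ⋃{f(γ) ∩ (sup(x ∩ γ), γ) : γ ∈ nacc(x)} is a postprocessing function; that is, for every x ∈ 𝒦(κ): (i) Φ_f(x) is club in sup(x); (ii) acc(Φ_f(x)) ⊆ acc(x); (iii) Φ_f(x) ∩ ᾱ = Φ_f(x ∩ ᾱ) for every ᾱ ∈ acc(Φ_f(x)). -/

import Mathlib

open Set Ordinal

noncomputable section

abbrev O : Type 1 := Ordinal.{0}

/-- `ssup A` is the strict supremum of a set of ordinals. -/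
def ssup (A : Set O) : O := sSup ((· + 1) '' A)

/-- `acc⁺(A)`: accumulation points below the strict sup. -/
def accP (A : Set O) : Set O := {α | α < ssup A ∧ 0 < α ∧ sSup (A ∩ Iio α) = α}

def accOf (A : Set O) : Set O := A ∩ accP A

def nacc (A : Set O) : Set O := A \ accOf A

def clOf (A : Set O) : Set O := A ∪ accP A

/-- order type of a set of ordinals -/
def otp (A : Set O) : Ordinal.{1} := Ordinal.type (Subrel ((· < ·) : O → O → Prop) (· ∈ A))

/-- lift a small ordinal one universe up -/
def olift (a : O) : Ordinal.{1} := Ordinal.lift.{1} a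

/-- `suc_σ(A)`: elements of `A` whose index in `A` is `j+1` for some `j < σ`. -/
def sucSet (σ : Ordinal.{1}) (A : Set O) : Set O := {β | β ∈ A ∧ ∃ j < σ, otp (A ∩ Iio β) = j + 1}

def UnbIn (A : Set O) (δ : O) : Prop := ∀ α < δ, ∃ β ∈ A, α < β ∧ β < δ

def IsClubIn (C : Set O) (δ : O) : Prop :=
  C ⊆ Iio δ ∧ UnbIn C δ ∧ ∀ α < δ, 0 < α → sSup (C ∩ Iio α) = α → α ∈ C

def IsStatIn (S : Set O) (δ : O) : Prop :=
  S ⊆ Iio δ ∧ ∀ D, IsClubIn D δ → (S ∩ D).Nonempty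

def Ecof (κ : O) (lam : Cardinal.{0}) : Set O := {δ | δ < κ ∧ δ.cof = lam}

def PhiSup (B x : Set O) : Set O :=
  if sSup (x ∩ B) = sSup x then clOf (x ∩ B) else x \ Iio (sSup (x ∩ B))

def PhiD (D x : Set O) : Set O :=
  if sSup (D ∩ Iio (sSup x)) = sSup x then
    {γ | ∃ η ∈ x, sInf D < η ∧ γ = sSup (D ∩ Iio η)}
  else x \ Iio (sSup (D ∩ Iio (sSup x)))

/-- `cf(δ)`-additive proper ideal on `δ` extending the bounded ideal. -/
def GoodIdeal (δ : O) (J : Set (Set O)) : Prop :=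
  (∀ A B : Set O, A ⊆ B → B ∈ J → A ∈ J) ∧
  (Iio δ ∉ J) ∧
  (∀ B : Set O, B ⊆ Iio δ → sSup B < δ → B ∈ J) ∧
  (∀ ξ < (Ordinal.cof δ).ord, ∀ f : O → Set O, (∀ i < ξ, f i ∈ J) → (⋃ i ∈ Iio ξ, f i) ∈ J)

/-- `𝒦(κ)`: nonempty closed bounded sets of ordinals whose supremum is not attained. -/
def Kset (κ : O) (x : Set O) : Prop :=
  x.Nonempty ∧ x ⊆ Iio κ ∧ accP x ⊆ x ∧ sSup x ∉ x

def Phif (f : O → Set O) (x : Set O) : Set O :=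
  x ∪ ⋃ γ ∈ nacc x, f γ ∩ Ioo (sSup (x ∩ Iio γ)) γ

/-- postprocessing function -/
def IsPP (κ : O) (Φ : Set O → Set O) : Prop :=
  ∀ x, Kset κ x →
    IsClubIn (Φ x) (sSup x) ∧
    accOf (Φ x) ⊆ accOf x ∧
    ∀ α ∈ accOf (Φ x), Φ x ∩ Iio α = Φ (x ∩ Iio α)

namespace S13

lemma mem_accP {A : Set O} {β : O} :
    β ∈ accP A ↔ β < ssup A ∧ 0 < β ∧ sSup (A ∩ Iio β) = β := Iff.rfl

lemma mem_accOf {A : Set O} {β : O} : β ∈ accOf A ↔ β ∈ A ∧ β ∈ accP A := Iff.rfl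

lemma mem_nacc {A : Set O} {β : O} : β ∈ nacc A ↔ β ∈ A ∧ β ∉ accOf A := Iff.rfl

lemma bddA {A : Set O} {κ : O} (h : A ⊆ Iio κ) : BddAbove A :=
  ⟨κ, fun _ hb => (h hb).le⟩

lemma lt_ssup {A : Set O} {κ : O} (hA : A ⊆ Iio κ) {β : O} (hβ : β ∈ A) :
    β < ssup A := by
  have himg : (· + 1) '' A ⊆ Iio (κ + 1) := by
    rintro _ ⟨b, hb, rfl⟩
    show b + 1 < κ + 1
    rw [Ordinal.add_one_eq_succ, Ordinal.add_one_eq_succ]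
    exact Order.succ_lt_succ (hA hb)
  have h1 : β + 1 ≤ ssup A := le_csSup (bddA himg) ⟨β, hβ, rfl⟩
  exact lt_of_lt_of_le (lt_add_one β) h1

lemma sSup_le_ssup {A : Set O} {κ : O} (hA : A ⊆ Iio κ) : sSup A ≤ ssup A :=
  csSup_le' fun _ hb => (lt_ssup hA hb).le

lemma mem_lt_sSup {κ : O} {x : Set O} (hx : Kset κ x) {β : O} (hβ : β ∈ x) :
    β < sSup x :=
  lt_of_le_of_ne (le_csSup (bddA hx.2.1) hβ) (fun h => hx.2.2.2 (h ▸ hβ))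

lemma Phif_subset {κ : O} {f : O → Set O} {x : Set O} (hx : Kset κ x) :
    Phif f x ⊆ Iio (sSup x) := by
  rintro β (hβ | hβ)
  · exact mem_lt_sSup hx hβ
  · simp only [mem_iUnion, mem_inter_iff, mem_Ioo] at hβ
    obtain ⟨γ, hγ, _, _, hhi⟩ := hβ
    exact hhi.trans (mem_lt_sSup hx hγ.1)

/-- key lemma: accumulation points of `Phif f x` are accumulation points of `x`. -/
lemma keyA {κ : O} {f : O → Set O} (hf : ∀ γ, (f γ).Finite ∧ f γ ⊆ Iio κ)
    {x : Set O} (hx : Kset κ x) {α : O} (hαle : α ≤ sSup x)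
    (hsup : sSup (Phif f x ∩ Iio α) = α) : sSup (x ∩ Iio α) = α := by
  set s := sSup (x ∩ Iio α) with hs
  have hsle : s ≤ α := csSup_le' fun b hb => hb.2.le
  by_contra hne
  have hslt : s < α := lt_of_le_of_ne hsle hne
  -- x ∩ Ici α is nonempty
  have hxI : (x ∩ Ici α).Nonempty := by
    by_contra h
    rw [Set.not_nonempty_iff_eq_empty, ← Set.disjoint_iff_inter_eq_empty] at h
    have hxsub : x ⊆ Iio α := fun b hb =>
      show b < α from lt_of_not_ge fun hge => (h.ne_of_mem hb (show b ∈ Ici α from hge)) rfl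
    have heq : x ∩ Iio α = x := Set.inter_eq_self_of_subset_left hxsub
    rw [heq] at hs
    exact absurd (hαle.trans_eq hs.symm) (not_le.mpr hslt)
  set γ₀ := sInf (x ∩ Ici α) with hγ₀
  have hγ₀mem : γ₀ ∈ x ∩ Ici α := csInf_mem hxI
  -- claim: everything in Phif f x strictly between s and α lies in f γ₀
  have claim : ∀ β ∈ Phif f x, s < β → β < α → β ∈ f γ₀ := by
    rintro β (hβ | hβ) h1 h2
    · exact absurd (le_csSup (bddA (κ := κ) fun b hb => hx.2.1 hb.1)
        (Set.mem_inter hβ h2)) (not_le.mpr h1)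
    · simp only [mem_iUnion, mem_inter_iff, mem_Ioo] at hβ
      obtain ⟨γ, hγn, hβf, hlo, hhi⟩ := hβ
      have hγx : γ ∈ x := hγn.1
      have hγα : α ≤ γ := by
        by_contra h
        push_neg at h
        have : γ ≤ s := le_csSup (bddA (κ := κ) fun b hb => hx.2.1 hb.1)
          (Set.mem_inter hγx h)
        exact absurd (h1.trans hhi) (not_lt.mpr this)
      have hle : γ₀ ≤ γ := csInf_le (OrderBot.bddBelow (x ∩ Ici α))
        (Set.mem_inter hγx hγα)
      rcases eq_or_lt_of_le hle with heq | hlt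
      · exact heq ▸ hβf
      · have hg : γ₀ ≤ sSup (x ∩ Iio γ) :=
          le_csSup (bddA (κ := κ) fun b hb => hx.2.1 hb.1)
            (Set.mem_inter hγ₀mem.1 hlt)
        exact absurd ((hg.trans_lt hlo).trans h2) (not_lt.mpr hγ₀mem.2)
  set S := f γ₀ ∩ Iio α with hS
  by_cases hSn : S.Nonempty
  · have hfin : S.Finite := (hf γ₀).1.inter_of_left _
    have hmax : sSup S ∈ S := hSn.csSup_mem hfin
    have hub : sSup (Phif f x ∩ Iio α) ≤ max s (sSup S) := by
      apply csSup_le'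
      rintro β ⟨hβ, hβα⟩
      rcases le_or_gt β s with h | h
      · exact h.trans (le_max_left _ _)
      · exact (le_csSup hfin.bddAbove
          (Set.mem_inter (claim β hβ h hβα) hβα)).trans (le_max_right _ _)
    rw [hsup] at hub
    exact absurd hub (not_le.mpr (max_lt hslt hmax.2))
  · have hub : sSup (Phif f x ∩ Iio α) ≤ s := by
      apply csSup_le'
      rintro β ⟨hβ, hβα⟩
      rcases le_or_gt β s with h | h
      · exact h
      · exact absurd (Set.mem_inter (claim β hβ h hβα) (show β ∈ Iio α from hβα))
          (fun hm => hSn ⟨β, hm⟩)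
    rw [hsup] at hub
    exact absurd hub (not_le.mpr hslt)

lemma inter_Iio_Iio {x : Set O} {α β : O} (h : β ≤ α) :
    x ∩ Iio α ∩ Iio β = x ∩ Iio β := by
  rw [inter_assoc, Iio_inter_Iio, min_eq_right h]

lemma accP_inter_iff {κ : O} {x : Set O} (hx : x ⊆ Iio κ) {α β : O}
    (hβx : β ∈ x) (hβα : β < α) :
    β ∈ accP (x ∩ Iio α) ↔ β ∈ accP x := by
  rw [mem_accP, mem_accP, inter_Iio_Iio hβα.le]
  constructor
  · rintro ⟨-, h0, hs⟩
    exact ⟨lt_ssup hx hβx, h0, hs⟩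
  · rintro ⟨-, h0, hs⟩
    exact ⟨lt_ssup (κ := α) (fun b hb => hb.2) (Set.mem_inter hβx hβα), h0, hs⟩

lemma nacc_inter {κ : O} {x : Set O} (hx : x ⊆ Iio κ) (α : O) :
    nacc (x ∩ Iio α) = nacc x ∩ Iio α := by
  ext β
  rw [mem_inter_iff, mem_nacc, mem_nacc, mem_accOf, mem_accOf, mem_inter_iff,
    mem_Iio]
  constructor
  · rintro ⟨⟨hβx, hβα⟩, hn⟩
    refine ⟨⟨hβx, fun hp => hn ⟨⟨hβx, hβα⟩, ?_⟩⟩, hβα⟩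
    exact (accP_inter_iff hx hβx hβα).mpr hp.2
  · rintro ⟨⟨hβx, hn⟩, hβα⟩
    exact ⟨⟨hβx, hβα⟩, fun hp => hn ⟨hβx, (accP_inter_iff hx hβx hβα).mp hp.2⟩⟩

end S13


/-- for every `f : κ → [κ]^{<ω}`, the operator `Φ_f` is a
postprocessing function. -/
theorem statement13 (κ : O) (f : O → Set O)
    (hf : ∀ γ, (f γ).Finite ∧ f γ ⊆ Iio κ) :
    IsPP κ (Phif f) := by
  intro x hx
  have hxκ := hx.2.1
  have hΦsub : Phif f x ⊆ Iio (sSup x) := S13.Phif_subset hx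
  refine ⟨⟨hΦsub, ?_, ?_⟩, ?_, ?_⟩
  · -- unbounded
    intro α hα
    obtain ⟨β, hβ, hαβ⟩ := (lt_csSup_iff (S13.bddA hxκ) hx.1).mp hα
    exact ⟨β, Or.inl hβ, hαβ, S13.mem_lt_sSup hx hβ⟩
  · -- closed
    intro α hα hα0 hsup
    have h := S13.keyA hf hx hα.le hsup
    exact Or.inl (hx.2.2.1 (S13.mem_accP.mpr
      ⟨hα.trans_le (S13.sSup_le_ssup hxκ), hα0, h⟩))
  · -- accOf (Phif f x) ⊆ accOf x
    rintro α hαa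
    obtain ⟨hαΦ, hαp⟩ := S13.mem_accOf.mp hαa
    obtain ⟨-, hα0, hsup⟩ := S13.mem_accP.mp hαp
    have hα : α < sSup x := hΦsub hαΦ
    have h := S13.keyA hf hx hα.le hsup
    have hp : α ∈ accP x := S13.mem_accP.mpr
      ⟨hα.trans_le (S13.sSup_le_ssup hxκ), hα0, h⟩
    exact S13.mem_accOf.mpr ⟨hx.2.2.1 hp, hp⟩
  · -- coherence
    rintro α hαa
    obtain ⟨hαΦ, hαp⟩ := S13.mem_accOf.mp hαa
    obtain ⟨-, hα0, hsupΦ⟩ := S13.mem_accP.mp hαp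
    have hα : α < sSup x := hΦsub hαΦ
    have hsα : sSup (x ∩ Iio α) = α := S13.keyA hf hx hα.le hsupΦ
    have hne : (x ∩ Iio α).Nonempty := by
      by_contra h
      rw [Set.not_nonempty_iff_eq_empty] at h
      rw [h, csSup_empty] at hsα
      exact absurd hsα (ne_of_lt hα0)
    ext β
    constructor
    · rintro ⟨(hβx | hβu), hβα⟩
      · exact Or.inl ⟨hβx, hβα⟩
      · simp only [mem_iUnion, mem_inter_iff, mem_Ioo] at hβu
        obtain ⟨γ, hγn, hβf, hlo, hhi⟩ := hβu
        have hγα : γ < α := by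
          by_contra h
          push_neg at h
          have h2 : α ≤ sSup (x ∩ Iio γ) := by
            rw [← hsα]
            exact csSup_le_csSup (S13.bddA (κ := κ) fun b hb => hxκ hb.1) hne
              (fun b hb => ⟨hb.1, hb.2.trans_le h⟩)
          exact absurd ((h2.trans_lt hlo).trans hβα) (lt_irrefl α)
        refine Or.inr ?_
        simp only [mem_iUnion, mem_inter_iff, mem_Ioo]
        refine ⟨γ, ?_, hβf, ?_, hhi⟩
        · rw [S13.nacc_inter hxκ α]; exact ⟨hγn, hγα⟩
        · rw [S13.inter_Iio_Iio hγα.le]; exact hlo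
    · rintro (⟨hβx, hβα⟩ | hβu)
      · exact ⟨Or.inl hβx, hβα⟩
      · simp only [mem_iUnion, mem_inter_iff, mem_Ioo] at hβu
        obtain ⟨γ, hγn, hβf, hlo, hhi⟩ := hβu
        rw [S13.nacc_inter hxκ α] at hγn
        rw [S13.inter_Iio_Iio hγn.2.le] at hlo
        refine ⟨Or.inr ?_, hhi.trans hγn.2⟩
        simp only [mem_iUnion, mem_inter_iff, mem_Ioo]
        exact ⟨γ, hγn.1, hβf, hlo, hhi⟩
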